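/- Let F be λ-relative strongly convex with λ ≥ 0 and suppose ρ_k^err satisfies the inexact optimality condition that η_k = δF/δρ(ρ_k^err) + (1/τ) log(ρ_k^err/ρ_{k−1}^err) has oscillation at most ε_k. Then, using Pinsker's inequality ‖ρ − ρ_k^err‖₁ ≤ √(2 KL(ρ ‖ ρ_k^err)), one has √(KL(ρ* ‖ ρ_k^err)) ≤ √(KL(ρ* ‖ ρ_{k−1}^err))/√(1 + τλ/2) + √2 τ ε_k, where ρ* is a global minimizer of F with density. -/

import Mathlib

open MeasureTheory

open Real


/-- `(x+1) log x - 2(x-1)` has derivative `log x + 1/x - 1`. -/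
private lemma aux_hasDeriv_f {x : ℝ} (hx : 0 < x) :
    HasDerivAt (fun y : ℝ => (y + 1) * Real.log y - 2 * (y - 1))
      (Real.log x + (x + 1) * x⁻¹ - 2) x := by
  have h1 : HasDerivAt (fun y : ℝ => (y + 1) * Real.log y)
      (1 * Real.log x + (x + 1) * x⁻¹) x :=
    (((hasDerivAt_id x).add_const 1)).mul (Real.hasDerivAt_log hx.ne')
  have h2 : HasDerivAt (fun y : ℝ => 2 * (y - 1)) 2 x := by
    simpa using ((hasDerivAt_id x).sub_const 1).const_mul 2
  exact (h1.sub h2).congr_deriv (by ring)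

private lemma aux_f_sign {x : ℝ} (hx : 0 < x) :
    (0 ≤ x - 1 → 0 ≤ (x + 1) * Real.log x - 2 * (x - 1)) ∧
    (x ≤ 1 → (x + 1) * Real.log x - 2 * (x - 1) ≤ 0) := by
  have hmono : MonotoneOn (fun y : ℝ => (y + 1) * Real.log y - 2 * (y - 1)) (Set.Ioi 0) := by
    apply monotoneOn_of_deriv_nonneg (convex_Ioi 0)
    · intro y hy
      exact ((aux_hasDeriv_f hy).differentiableAt.continuousAt).continuousWithinAt
    · intro y hy
      rw [interior_Ioi] at hy
      exact (aux_hasDeriv_f hy).differentiableAt.differentiableWithinAt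
    · intro y hy
      rw [interior_Ioi] at hy
      rw [(aux_hasDeriv_f hy).deriv]
      have h := Real.one_sub_inv_le_log_of_pos hy
      have : (y + 1) * y⁻¹ = 1 + y⁻¹ := by
        rw [add_mul, one_mul, mul_inv_cancel₀ (ne_of_gt hy)]
      rw [this]
      linarith
  constructor
  · intro h
    have h1 : (1 : ℝ) ∈ Set.Ioi (0:ℝ) := by norm_num
    have := hmono h1 (by exact hx) (by linarith)
    simpa using this
  · intro h
    have h1 : (1 : ℝ) ∈ Set.Ioi (0:ℝ) := by norm_num
    have := hmono (by exact hx) h1 h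
    simpa using this

private lemma aux_hasDeriv_g {x : ℝ} (hx : 0 < x) :
    HasDerivAt (fun y : ℝ => (y + 2) * (y * Real.log y - y + 1) - 3 / 2 * (y - 1) ^ 2)
      (2 * ((x + 1) * Real.log x - 2 * (x - 1))) x := by
  have h1 : HasDerivAt (fun y : ℝ => y * Real.log y - y + 1) (Real.log x + 1 - 1) x := by
    simpa using ((Real.hasDerivAt_mul_log hx.ne').sub (hasDerivAt_id x)).add_const 1
  have h2 : HasDerivAt (fun y : ℝ => (y + 2) * (y * Real.log y - y + 1))
      (1 * (x * Real.log x - x + 1) + (x + 2) * (Real.log x + 1 - 1)) x :=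
    ((hasDerivAt_id x).add_const 2).mul h1
  have h3 : HasDerivAt (fun y : ℝ => 3 / 2 * (y - 1) ^ 2) (3 / 2 * (2 * (x - 1))) x := by
    have := (((hasDerivAt_id x).sub_const 1).pow 2).const_mul (3/2 : ℝ)
    simpa using this
  have := h2.sub h3
  exact this.congr_deriv (by ring)

/-- The key pointwise Pinsker inequality constant: `(3/2)(x-1)^2 ≤ (x+2)(x log x - x + 1)`. -/
private lemma aux_g_nonneg {x : ℝ} (hx : 0 < x) :
    3 / 2 * (x - 1) ^ 2 ≤ (x + 2) * (x * Real.log x - x + 1) := by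
  have g1 : (fun y : ℝ => (y + 2) * (y * Real.log y - y + 1) - 3 / 2 * (y - 1) ^ 2) 1 = 0 := by
    simp [Real.log_one]
  rcases le_total 1 x with h | h
  · have hmono : MonotoneOn
        (fun y : ℝ => (y + 2) * (y * Real.log y - y + 1) - 3 / 2 * (y - 1) ^ 2)
        (Set.Ici 1) := by
      apply monotoneOn_of_deriv_nonneg (convex_Ici 1)
      · intro y hy
        have hy0 : (0:ℝ) < y := lt_of_lt_of_le one_pos hy
        exact ((aux_hasDeriv_g hy0).differentiableAt.continuousAt).continuousWithinAt
      · intro y hy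
        rw [interior_Ici] at hy
        exact (aux_hasDeriv_g (lt_trans one_pos hy)).differentiableAt.differentiableWithinAt
      · intro y hy
        rw [interior_Ici] at hy
        have hy0 : (0:ℝ) < y := lt_trans one_pos hy
        rw [(aux_hasDeriv_g hy0).deriv]
        have := (aux_f_sign hy0).1 (by linarith [Set.mem_Ioi.1 hy] : 0 ≤ y - 1)
        linarith
    have := hmono (Set.self_mem_Ici) (by exact h) h
    rw [g1] at this
    linarith
  · have hanti : AntitoneOn
        (fun y : ℝ => (y + 2) * (y * Real.log y - y + 1) - 3 / 2 * (y - 1) ^ 2)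
        (Set.Ioc 0 1) := by
      apply antitoneOn_of_deriv_nonpos (convex_Ioc 0 1)
      · intro y hy
        exact ((aux_hasDeriv_g hy.1).differentiableAt.continuousAt).continuousWithinAt
      · intro y hy
        rw [interior_Ioc] at hy
        exact (aux_hasDeriv_g hy.1).differentiableAt.differentiableWithinAt
      · intro y hy
        rw [interior_Ioc] at hy
        rw [(aux_hasDeriv_g hy.1).deriv]
        have := (aux_f_sign hy.1).2 hy.2.le
        linarith
    have := hanti (Set.mem_Ioc.2 ⟨hx, h⟩) (Set.mem_Ioc.2 ⟨one_pos, le_refl 1⟩) h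
    rw [g1] at this
    linarith

/-- Basic entropy inequality: `p - q ≤ p log (p/q)`. -/
private lemma aux_sub_le_mul_log {p q : ℝ} (hp : 0 < p) (hq : 0 < q) :
    p - q ≤ p * Real.log (p / q) := by
  have h := Real.one_sub_inv_le_log_of_pos (div_pos hp hq)
  have hinv : (p / q)⁻¹ = q / p := by
    rw [inv_div]
  rw [hinv] at h
  have := mul_le_mul_of_nonneg_left h hp.le
  have hqp : p * (1 - q / p) = p - q := by field_simp [hp.ne']
  linarith [hqp ▸ this]

/-- Entropy nonnegative pointwise form: `0 ≤ x log x - x + 1`. -/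
private lemma aux_h_nonneg {x : ℝ} (hx : 0 < x) : 0 ≤ x * Real.log x - x + 1 := by
  have h := Real.one_sub_inv_le_log_of_pos hx
  have := mul_le_mul_of_nonneg_left h hx.le
  have hh : x * (1 - x⁻¹) = x - 1 := by field_simp
  nlinarith

/-- AM-GM form of the pointwise Pinsker inequality. -/
private lemma aux_pinsker_pointwise {p q t : ℝ} (hp : 0 < p) (hq : 0 < q) (ht : 0 < t) :
    |p - q| ≤ t * (p + 2 * q) / 3 + (p * Real.log (p / q) - p + q) / (2 * t) := by
  set x := p / q with hxdef
  have hx : 0 < x := div_pos hp hq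
  have hpq : p = q * x := by rw [hxdef]; field_simp
  have hg := aux_g_nonneg hx
  have hh := aux_h_nonneg hx
  have hx2 : (0:ℝ) < x + 2 := by linarith
  -- cleared-denominator inequality: 6 t |x-1| ≤ 2 t² (x+2) + 3 (x log x - x + 1)
  have key : 6 * t * |x - 1| ≤ 2 * t ^ 2 * (x + 2) + 3 * (x * Real.log x - x + 1) := by
    have habs : |x - 1| ^ 2 = (x - 1) ^ 2 := sq_abs _
    nlinarith [sq_nonneg (2 * t * (x + 2) - 3 * |x - 1|), abs_nonneg (x - 1),
      mul_pos ht hx2, sq_nonneg (t * (x+2))]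
  have key2 : |x - 1| ≤ t * (x + 2) / 3 + (x * Real.log x - x + 1) / (2 * t) := by
    rw [div_add_div _ _ (by norm_num : (3:ℝ) ≠ 0) (by positivity : (2*t) ≠ 0)]
    rw [le_div_iff₀ (by positivity)]
    nlinarith [key]
  have hlog : Real.log (p / q) = Real.log x := rfl
  have e1 : |p - q| = q * |x - 1| := by
    rw [hpq, show q * x - q = q * (x - 1) by ring, abs_mul, abs_of_pos hq]
  have e2 : t * (p + 2 * q) / 3 + (p * Real.log (p / q) - p + q) / (2 * t)
      = q * (t * (x + 2) / 3 + (x * Real.log x - x + 1) / (2 * t)) := by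
    rw [hlog, hpq]
    field_simp
  rw [e1, e2]
  exact mul_le_mul_of_nonneg_left key2 hq.le

set_option maxHeartbeats 1000000 in
/-- One-step inequality for inexact IKLPD under λ-relative strong convexity and an
oscillation bound on the first variation of the implicit subproblem. -/
theorem inexact_iklpd_one_step {Θ : Type*} [MeasurableSpace Θ] (μ : Measure Θ)
    (F : (Θ → ℝ) → ℝ) (δF : (Θ → ℝ) → Θ → ℝ)
    (lam τ ε : ℝ) (hlam : 0 < lam) (hτ : 0 < τ) (hε : 0 ≤ ε)
    (ρstar ρk ρprev : Θ → ℝ)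
    (hρstar : ∀ θ, 0 < ρstar θ) (hρk : ∀ θ, 0 < ρk θ) (hρprev : ∀ θ, 0 < ρprev θ)
    (h1 : ∫ θ, ρstar θ ∂μ = 1) (h2 : ∫ θ, ρk θ ∂μ = 1) (h3 : ∫ θ, ρprev θ ∂μ = 1)
    -- λ-relative strong convexity (with modulus λ/2, as in the paper's derivation)
    (hconv : ∀ f g : Θ → ℝ, (∀ θ, 0 < f θ) → (∀ θ, 0 < g θ) →
      (∫ θ, f θ ∂μ = 1) → (∫ θ, g θ ∂μ = 1) →
      F g + (∫ θ, δF g θ * (f θ - g θ) ∂μ)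
          + (lam / 2) * (∫ θ, f θ * Real.log (f θ / g θ) ∂μ) ≤ F f)
    -- ρ* is a global minimizer of F among probability densities
    (hmin : ∀ f : Θ → ℝ, (∀ θ, 0 < f θ) → (∫ θ, f θ ∂μ = 1) → F ρstar ≤ F f)
    -- oscillation of η_k = δF(ρk) + (1/τ) log(ρk/ρprev) is at most ε
    (hosc : ∀ θ θ' : Θ,
      |(δF ρk θ + (1 / τ) * Real.log (ρk θ / ρprev θ))
        - (δF ρk θ' + (1 / τ) * Real.log (ρk θ' / ρprev θ'))| ≤ ε)
    (i1 : Integrable (fun θ => ρstar θ * Real.log (ρstar θ / ρk θ)) μ)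
    (i2 : Integrable (fun θ => ρstar θ * Real.log (ρstar θ / ρprev θ)) μ)
    (i3 : Integrable (fun θ => ρk θ * Real.log (ρk θ / ρprev θ)) μ)
    (i4 : Integrable (fun θ => δF ρk θ * (ρstar θ - ρk θ)) μ) :
    Real.sqrt (∫ θ, ρstar θ * Real.log (ρstar θ / ρk θ) ∂μ)
      ≤ Real.sqrt (∫ θ, ρstar θ * Real.log (ρstar θ / ρprev θ) ∂μ)
          / Real.sqrt (1 + τ * lam / 2)
        + Real.sqrt 2 * τ * ε := by
  -- Θ is nonempty (otherwise h1 is absurd)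
  rcases isEmpty_or_nonempty Θ with hΘ | hΘ
  · rw [integral_of_isEmpty] at h1; norm_num at h1
  obtain ⟨θ₀⟩ := hΘ
  -- integrability of the densities
  have iρs : Integrable ρstar μ := by
    by_contra h; rw [integral_undef h] at h1; norm_num at h1
  have iρk : Integrable ρk μ := by
    by_contra h; rw [integral_undef h] at h2; norm_num at h2
  have iρp : Integrable ρprev μ := by
    by_contra h; rw [integral_undef h] at h3; norm_num at h3
  obtain ⟨A, hAdef⟩ : ∃ x, ∫ θ, ρstar θ * Real.log (ρstar θ / ρk θ) ∂μ = x := ⟨_, rfl⟩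
  obtain ⟨B, hBdef⟩ : ∃ x, ∫ θ, ρstar θ * Real.log (ρstar θ / ρprev θ) ∂μ = x := ⟨_, rfl⟩
  obtain ⟨C, hCdef⟩ : ∃ x, ∫ θ, ρk θ * Real.log (ρk θ / ρprev θ) ∂μ = x := ⟨_, rfl⟩
  rw [hAdef, hBdef]
  have isk : Integrable (fun θ => ρstar θ - ρk θ) μ := iρs.sub iρk
  have isp : Integrable (fun θ => ρstar θ - ρprev θ) μ := iρs.sub iρp
  have ikp : Integrable (fun θ => ρk θ - ρprev θ) μ := iρk.sub iρp
  -- nonnegativity of the KL divergences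
  have hA : 0 ≤ A := by
    have hmo := integral_mono isk i1
      (fun θ => aux_sub_le_mul_log (hρstar θ) (hρk θ))
    rw [integral_sub iρs iρk, h1, h2, hAdef] at hmo
    simpa using hmo
  have hB : 0 ≤ B := by
    have hmo := integral_mono isp i2
      (fun θ => aux_sub_le_mul_log (hρstar θ) (hρprev θ))
    rw [integral_sub iρs iρp, h1, h3, hBdef] at hmo
    simpa using hmo
  have hC : 0 ≤ C := by
    have hmo := integral_mono ikp i3
      (fun θ => aux_sub_le_mul_log (hρk θ) (hρprev θ))
    rw [integral_sub iρk iρp, h2, h3, hCdef] at hmo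
    simpa using hmo
  -- three-point identity
  have hlogid : ∀ θ, Real.log (ρk θ / ρprev θ) * (ρstar θ - ρk θ)
      = ρstar θ * Real.log (ρstar θ / ρprev θ) - ρstar θ * Real.log (ρstar θ / ρk θ)
        - ρk θ * Real.log (ρk θ / ρprev θ) := by
    intro θ
    rw [Real.log_div (hρk θ).ne' (hρprev θ).ne', Real.log_div (hρstar θ).ne' (hρprev θ).ne',
      Real.log_div (hρstar θ).ne' (hρk θ).ne']
    ring
  have i21 : Integrable (fun θ => ρstar θ * Real.log (ρstar θ / ρprev θ)
      - ρstar θ * Real.log (ρstar θ / ρk θ)) μ := i2.sub i1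
  have iL : Integrable (fun θ => Real.log (ρk θ / ρprev θ) * (ρstar θ - ρk θ)) μ :=
    (i21.sub i3).congr (Filter.Eventually.of_forall fun θ => (hlogid θ).symm)
  have EL : ∫ θ, Real.log (ρk θ / ρprev θ) * (ρstar θ - ρk θ) ∂μ = B - A - C := by
    rw [integral_congr_ae (Filter.Eventually.of_forall hlogid),
      integral_sub i21 i3, integral_sub i2 i1, hAdef, hBdef, hCdef]
  -- the inexact optimality function η and its integral against ρ* - ρk
  have ηexp : (fun θ => (δF ρk θ + (1 / τ) * Real.log (ρk θ / ρprev θ)) * (ρstar θ - ρk θ))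
      = fun θ => δF ρk θ * (ρstar θ - ρk θ)
          + (1 / τ) * (Real.log (ρk θ / ρprev θ) * (ρstar θ - ρk θ)) := by
    funext θ; ring
  have iη : Integrable
      (fun θ => (δF ρk θ + (1 / τ) * Real.log (ρk θ / ρprev θ)) * (ρstar θ - ρk θ)) μ := by
    rw [ηexp]; exact i4.add (iL.const_mul _)
  have Eη : ∫ θ, (δF ρk θ + (1 / τ) * Real.log (ρk θ / ρprev θ)) * (ρstar θ - ρk θ) ∂μ
      = (∫ θ, δF ρk θ * (ρstar θ - ρk θ) ∂μ) + (1 / τ) * (B - A - C) := by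
    rw [ηexp, integral_add i4 (iL.const_mul _), integral_const_mul, EL]
  -- center η by its value at θ₀
  obtain ⟨c, hcdef⟩ : ∃ x, δF ρk θ₀ + (1 / τ) * Real.log (ρk θ₀ / ρprev θ₀) = x := ⟨_, rfl⟩
  have ηcexp : (fun θ => ((δF ρk θ + (1 / τ) * Real.log (ρk θ / ρprev θ)) - c)
        * (ρstar θ - ρk θ))
      = fun θ => (δF ρk θ + (1 / τ) * Real.log (ρk θ / ρprev θ)) * (ρstar θ - ρk θ)
          - c * (ρstar θ - ρk θ) := by
    funext θ; ring
  have iηc : Integrable (fun θ => ((δF ρk θ + (1 / τ) * Real.log (ρk θ / ρprev θ)) - c)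
      * (ρstar θ - ρk θ)) μ := by
    rw [ηcexp]; exact iη.sub (isk.const_mul c)
  have Eηc : ∫ θ, ((δF ρk θ + (1 / τ) * Real.log (ρk θ / ρprev θ)) - c)
        * (ρstar θ - ρk θ) ∂μ
      = ∫ θ, (δF ρk θ + (1 / τ) * Real.log (ρk θ / ρprev θ)) * (ρstar θ - ρk θ) ∂μ := by
    have icd : Integrable (fun θ => c * (ρstar θ - ρk θ)) μ := isk.const_mul c
    rw [ηcexp, integral_sub iη icd, integral_const_mul, integral_sub iρs iρk, h1, h2]
    ring
  -- the L¹ norm of ρ* - ρk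
  obtain ⟨N, hNdef⟩ : ∃ x, ∫ θ, |ρstar θ - ρk θ| ∂μ = x := ⟨_, rfl⟩
  have iabs : Integrable (fun θ => |ρstar θ - ρk θ|) μ := isk.abs
  have hN0 : 0 ≤ N := by
    rw [← hNdef]
    positivity
  -- oscillation bound
  have habs : |∫ θ, ((δF ρk θ + (1 / τ) * Real.log (ρk θ / ρprev θ)) - c)
      * (ρstar θ - ρk θ) ∂μ| ≤ ε * N := by
    calc |∫ θ, ((δF ρk θ + (1 / τ) * Real.log (ρk θ / ρprev θ)) - c)
        * (ρstar θ - ρk θ) ∂μ|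
        ≤ ∫ θ, |((δF ρk θ + (1 / τ) * Real.log (ρk θ / ρprev θ)) - c)
            * (ρstar θ - ρk θ)| ∂μ := by
          have := norm_integral_le_integral_norm (μ := μ)
            (fun θ => ((δF ρk θ + (1 / τ) * Real.log (ρk θ / ρprev θ)) - c)
              * (ρstar θ - ρk θ))
          simpa only [Real.norm_eq_abs] using this
      _ ≤ ∫ θ, ε * |ρstar θ - ρk θ| ∂μ := by
          apply integral_mono iηc.abs (iabs.const_mul ε)
          intro θ
          have hb := mul_le_mul_of_nonneg_right (hcdef ▸ hosc θ θ₀)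
            (abs_nonneg (ρstar θ - ρk θ))
          simpa [abs_mul] using hb
      _ = ε * N := by rw [integral_const_mul, hNdef]
  -- core inequality from convexity, minimality, and the oscillation bound
  have hcore : lam / 2 * A + (1 / τ) * (A + C - B) ≤ ε * N := by
    have s1 := hconv ρstar ρk hρstar hρk h1 h2
    rw [hAdef] at s1
    have s2 := hmin ρk hρk h2
    have s4 := neg_abs_le (∫ θ, ((δF ρk θ + (1 / τ) * Real.log (ρk θ / ρprev θ)) - c)
      * (ρstar θ - ρk θ) ∂μ)
    rw [Eηc, Eη] at s4
    rw [Eηc, Eη] at habs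
    have hτinv : (1 / τ) * (A + C - B) = -((1 / τ) * (B - A - C)) := by ring
    have h5 : -(ε * N) ≤ (∫ θ, δF ρk θ * (ρstar θ - ρk θ) ∂μ) + (1 / τ) * (B - A - C) := by
      have := neg_abs_le ((∫ θ, δF ρk θ * (ρstar θ - ρk θ) ∂μ) + (1 / τ) * (B - A - C))
      linarith [habs]
    rw [hτinv]
    linarith [h5, s1, s2]
  -- Pinsker via AM-GM: N ≤ t + A/(2t) for every t > 0
  have hNle : ∀ t : ℝ, 0 < t → N ≤ t + A / (2 * t) := by
    intro t ht
    have pw : ∀ θ, |ρstar θ - ρk θ|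
        ≤ t * (ρstar θ + 2 * ρk θ) / 3
          + (ρstar θ * Real.log (ρstar θ / ρk θ) - ρstar θ + ρk θ) / (2 * t) :=
      fun θ => aux_pinsker_pointwise (hρstar θ) (hρk θ) ht
    have ik2 : Integrable (fun θ => 2 * ρk θ) μ := iρk.const_mul 2
    have isum : Integrable (fun θ => ρstar θ + 2 * ρk θ) μ := iρs.add ik2
    have iR1 : Integrable (fun θ => t * (ρstar θ + 2 * ρk θ) / 3) μ :=
      (isum.const_mul t).div_const 3
    have i1s : Integrable (fun θ => ρstar θ * Real.log (ρstar θ / ρk θ) - ρstar θ) μ :=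
      i1.sub iρs
    have i1sk : Integrable (fun θ => ρstar θ * Real.log (ρstar θ / ρk θ) - ρstar θ + ρk θ) μ :=
      i1s.add iρk
    have iR2 : Integrable
        (fun θ => (ρstar θ * Real.log (ρstar θ / ρk θ) - ρstar θ + ρk θ) / (2 * t)) μ :=
      i1sk.div_const (2 * t)
    have hmo := integral_mono iabs (iR1.add iR2) pw
    have ER : ∫ θ, (t * (ρstar θ + 2 * ρk θ) / 3
        + (ρstar θ * Real.log (ρstar θ / ρk θ) - ρstar θ + ρk θ) / (2 * t)) ∂μ
        = t + A / (2 * t) := by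
      rw [integral_add iR1 iR2, integral_div, integral_const_mul,
        integral_add iρs ik2, integral_const_mul, h1, h2,
        integral_div, integral_add i1s iρk,
        integral_sub i1 iρs, h1, h2, hAdef]
      field_simp
      ring
    rw [hNdef] at hmo
    exact le_trans hmo (le_of_eq ER)
  -- combine: (1 + τλ/2) A ≤ B + √2 τ ε √A
  have hα : (1:ℝ) ≤ 1 + τ * lam / 2 := by have := mul_pos hτ hlam; linarith
  rcases eq_or_lt_of_le hA with hA0 | hA0
  · rw [← hA0, Real.sqrt_zero]
    positivity
  · obtain ⟨t, htdef⟩ : ∃ x, Real.sqrt (A / 2) = x := ⟨_, rfl⟩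
    have ht : 0 < t := htdef ▸ Real.sqrt_pos.2 (by linarith)
    have ht2 : t ^ 2 = A / 2 := htdef ▸ Real.sq_sqrt (by linarith : (0:ℝ) ≤ A / 2)
    have hAt : A / (2 * t) = t := by
      rw [div_eq_iff (by positivity)]
      linear_combination -2 * ht2
    have hNt : N ≤ 2 * t := by
      have := hNle t ht
      rw [hAt] at this
      linarith
    have h2t : 2 * t = Real.sqrt 2 * Real.sqrt A := by
      have hsq : (2 * t) ^ 2 = 2 * A := by linear_combination 4 * ht2
      have h4 : 2 * t = Real.sqrt (2 * A) := by
        rw [← hsq, Real.sqrt_sq (by positivity)]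
      rw [h4, Real.sqrt_mul (by norm_num : (0:ℝ) ≤ 2) A]
    have hNsqrt : N ≤ Real.sqrt 2 * Real.sqrt A := h2t ▸ hNt
    have key : (1 + τ * lam / 2) * A ≤ B + Real.sqrt 2 * τ * ε * Real.sqrt A := by
      have hm := mul_le_mul_of_nonneg_left hcore hτ.le
      have hεN : ε * N ≤ ε * (Real.sqrt 2 * Real.sqrt A) :=
        mul_le_mul_of_nonneg_left hNsqrt hε
      have hτεN : τ * (ε * N) ≤ τ * (ε * (Real.sqrt 2 * Real.sqrt A)) :=
        mul_le_mul_of_nonneg_left hεN hτ.le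
      have hexp : τ * (lam / 2 * A + 1 / τ * (A + C - B)) = τ * lam / 2 * A + (A + C - B) := by
        field_simp
      rw [hexp] at hm
      linarith [hm, hτεN, hC]
    -- solve the quadratic inequality in √A
    obtain ⟨s, hsdef⟩ : ∃ x, Real.sqrt A = x := ⟨_, rfl⟩
    obtain ⟨b, hbdef⟩ : ∃ x, Real.sqrt B = x := ⟨_, rfl⟩
    obtain ⟨r, hrdef⟩ : ∃ x, Real.sqrt (1 + τ * lam / 2) = x := ⟨_, rfl⟩
    obtain ⟨e, hedef⟩ : ∃ x, Real.sqrt 2 * τ * ε = x := ⟨_, rfl⟩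
    rw [hsdef, hbdef, hrdef, hedef]
    have hs2 : s ^ 2 = A := hsdef ▸ Real.sq_sqrt hA
    have hb2 : b ^ 2 = B := hbdef ▸ Real.sq_sqrt hB
    have hr2 : r ^ 2 = 1 + τ * lam / 2 := hrdef ▸ Real.sq_sqrt (by linarith)
    have hs0 : 0 < s := hsdef ▸ Real.sqrt_pos.2 hA0
    have hb0 : 0 ≤ b := hbdef ▸ Real.sqrt_nonneg _
    have hr1 : 1 ≤ r := hrdef ▸ Real.one_le_sqrt.2 hα
    have hr0 : 0 < r := lt_of_lt_of_le one_pos hr1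
    have he0 : 0 ≤ e := hedef ▸ (by positivity)
    rw [hsdef, hedef] at key
    have hkey : r ^ 2 * s ^ 2 ≤ b ^ 2 + e * s := by
      rw [hs2, hb2, hr2]; linarith [key]
    by_contra hcon
    push_neg at hcon
    have hbr : 0 ≤ b / r := div_nonneg hb0 hr0.le
    have hse : 0 < s - e := by linarith
    have hbe : b < r * (s - e) := by
      have h6 : b / r < s - e := by linarith
      have h7 := (div_lt_iff₀ hr0).1 h6
      linarith [h7, mul_comm (s - e) r]
    have hrs : 1 ≤ r ^ 2 := by
      have hrr := mul_le_mul hr1 hr1 zero_le_one hr0.le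
      linarith [hrr, pow_two r]
    have hsq : b ^ 2 < (r * (s - e)) ^ 2 := by
      have hm := mul_self_lt_mul_self hb0 hbe
      linarith [hm, pow_two b, pow_two (r * (s - e))]
    have hpos : 0 < e * s - 2 * r ^ 2 * e * s + r ^ 2 * e ^ 2 := by linarith [hsq, hkey]
    rcases eq_or_lt_of_le he0 with he | he
    · rw [← he] at hpos
      linarith [hpos]
    · have h8 : 0 < s - 2 * r ^ 2 * s + r ^ 2 * e := by
        by_contra h9
        push_neg at h9
        have h10 := mul_nonpos_of_nonneg_of_nonpos he.le h9
        linarith [h10, hpos]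
      have h10 : r ^ 2 * s ≤ 2 * r ^ 2 * s - s := by
        have := mul_le_mul_of_nonneg_right hrs hs0.le
        linarith [this]
      have h11 : r ^ 2 * s < r ^ 2 * e := by linarith
      have h12 : s < e := (mul_lt_mul_iff_right₀ (by positivity : (0:ℝ) < r ^ 2)).1 h11
      linarith
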